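/- Let X be a nonempty compact length space, I = [a,b] ⊆ ℝ a nondegenerate closed bounded interval, c > 0, and for each j ∈ ℕ let f_j : I → ℝ be continuous with f_j(t) ≥ c for all t ∈ I; assume (f_j) converges uniformly on I to f_∞. Then each null distance d̂_{f_j} and d̂_{f_∞} is a metric on I × X inducing the (compact) product topology, and the Gromov–Hausdorff distance between the compact metric spaces (I × X, d̂_{f_j}) and (I × X, d̂_{f_∞}) tends to 0 as j → ∞. -/

import Mathlib

open MeasureTheory

universe u

/-- Causal relation of the warped product `I ×_f X`: `(s,x) ≼_f (t,y)` iff `s ≤ t` and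
`d(x,y) ≤ ∫_s^t f(u)⁻¹ du`. -/
def WPCausal {X : Type u} [MetricSpace X] (f : ℝ → ℝ) (p q : ℝ × X) : Prop :=
  p.1 ≤ q.1 ∧
    ENNReal.ofReal (dist p.2 q.2) ≤ ∫⁻ u in Set.Ioc p.1 q.1, ENNReal.ofReal ((f u)⁻¹)

/-- `σ` is a piecewise causal chain with `n+1` segments from `p` to `q` inside `I × X`. -/
def WPChain {X : Type u} [MetricSpace X] (I : Set ℝ) (f : ℝ → ℝ) (p q : ℝ × X) (n : ℕ)
    (σ : ℕ → ℝ × X) : Prop :=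
  σ 0 = p ∧ σ (n + 1) = q ∧ (∀ i ≤ n + 1, (σ i).1 ∈ I) ∧
    ∀ i ≤ n, WPCausal f (σ i) (σ (i + 1)) ∨ WPCausal f (σ (i + 1)) (σ i)

/-- The null distance of the warped product `I ×_f X`. -/
noncomputable def nullDist {X : Type u} [MetricSpace X] (I : Set ℝ) (f : ℝ → ℝ)
    (p q : ℝ × X) : ℝ :=
  sInf { r | ∃ n σ, WPChain I f p q n σ ∧
    r = ∑ i ∈ Finset.range (n + 1), |(σ (i + 1)).1 - (σ i).1| }

/-- `d` is a metric on the set of points of `I × X`. -/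
def IsMetricOnStrip {X : Type u} (I : Set ℝ) (d : ℝ × X → ℝ × X → ℝ) : Prop :=
  (∀ p q : ℝ × X, p.1 ∈ I → q.1 ∈ I → (d p q = 0 ↔ p = q)) ∧
  (∀ p q : ℝ × X, p.1 ∈ I → q.1 ∈ I → d p q = d q p) ∧
  (∀ p q r : ℝ × X, p.1 ∈ I → q.1 ∈ I → r.1 ∈ I → d p r ≤ d p q + d q r)

/-- `d` induces the product topology on `I × X` (mutual ball containment against the
max-product distance). -/
def InducesProductTopology {X : Type u} [MetricSpace X] (I : Set ℝ)
    (d : ℝ × X → ℝ × X → ℝ) : Prop :=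
  ∀ p : ℝ × X, p.1 ∈ I → ∀ ε : ℝ, 0 < ε →
    (∃ δ > 0, ∀ q : ℝ × X, q.1 ∈ I → max |p.1 - q.1| (dist p.2 q.2) < δ → d p q < ε) ∧
    (∃ δ > 0, ∀ q : ℝ × X, q.1 ∈ I → d p q < δ → max |p.1 - q.1| (dist p.2 q.2) < ε)

/-- The Gromov--Hausdorff distance between `(I × X, d)` and `(I × X, d')` is at most `ε`:
both embed isometrically into a common metric space with mutually `ε`-dense images. -/
def GHClose {X : Type u} (I : Set ℝ) (d d' : ℝ × X → ℝ × X → ℝ) (ε : ℝ) : Prop :=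
  ∃ (Z : Type u) (dZ : Z → Z → ℝ),
    ((∀ z w, dZ z w = 0 ↔ z = w) ∧ (∀ z w, dZ z w = dZ w z) ∧
      ∀ z w v, dZ z v ≤ dZ z w + dZ w v) ∧
    ∃ φ ψ : {p : ℝ × X // p.1 ∈ I} → Z,
      (∀ u v, dZ (φ u) (φ v) = d u.1 v.1) ∧
      (∀ u v, dZ (ψ u) (ψ v) = d' u.1 v.1) ∧
      (∀ u, ∃ v, dZ (φ u) (ψ v) ≤ ε) ∧ (∀ v, ∃ u, dZ (φ u) (ψ v) ≤ ε)
open Set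

namespace S12

lemma cap_le {a b c : ℝ} {g : ℝ → ℝ} (hc : 0 < c) (hg : ∀ t ∈ Icc a b, c ≤ g t)
    {u v : ℝ} (hu : u ∈ Icc a b) (hv : v ∈ Icc a b) (huv : u ≤ v) :
    ∫⁻ t in Set.Ioc u v, ENNReal.ofReal ((g t)⁻¹) ≤ ENNReal.ofReal ((v - u) / c) := by
  have h1 : ∫⁻ t in Set.Ioc u v, ENNReal.ofReal ((g t)⁻¹)
      ≤ ∫⁻ _ in Set.Ioc u v, ENNReal.ofReal c⁻¹ := by
    refine lintegral_mono_ae ((ae_restrict_iff' measurableSet_Ioc).2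
      (Filter.Eventually.of_forall ?_))
    intro t ht
    have htI : t ∈ Icc a b := ⟨hu.1.trans ht.1.le, ht.2.trans hv.2⟩
    exact ENNReal.ofReal_le_ofReal (inv_anti₀ hc (hg t htI))
  refine h1.trans ?_
  rw [setLIntegral_const, Real.volume_Ioc, ← ENNReal.ofReal_mul (by positivity)]
  exact ENNReal.ofReal_le_ofReal (by rw [div_eq_inv_mul])

lemma le_cap {a b c C : ℝ} {g : ℝ → ℝ} (hc : 0 < c) (hg : ∀ t ∈ Icc a b, c ≤ g t)
    (hC : ∀ t ∈ Icc a b, g t ≤ C)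
    {u v : ℝ} (hu : u ∈ Icc a b) (hv : v ∈ Icc a b) (huv : u ≤ v) :
    ENNReal.ofReal ((v - u) / C) ≤ ∫⁻ t in Set.Ioc u v, ENNReal.ofReal ((g t)⁻¹) := by
  have hC0 : 0 < C := hc.trans_le ((hg u hu).trans (hC u hu))
  have h1 : (∫⁻ _ in Set.Ioc u v, ENNReal.ofReal C⁻¹)
      ≤ ∫⁻ t in Set.Ioc u v, ENNReal.ofReal ((g t)⁻¹) := by
    refine lintegral_mono_ae ((ae_restrict_iff' measurableSet_Ioc).2
      (Filter.Eventually.of_forall ?_))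
    intro t ht
    have htI : t ∈ Icc a b := ⟨hu.1.trans ht.1.le, ht.2.trans hv.2⟩
    refine ENNReal.ofReal_le_ofReal (inv_anti₀ (hc.trans_le (hg t htI)) (hC t htI))
  refine le_trans ?_ h1
  rw [setLIntegral_const, Real.volume_Ioc, ← ENNReal.ofReal_mul (by positivity)]
  exact ENNReal.ofReal_le_ofReal (by rw [div_eq_inv_mul])

lemma causal_dist_le {X : Type u} [MetricSpace X] {a b c : ℝ} {g : ℝ → ℝ} (hc : 0 < c)
    (hg : ∀ t ∈ Icc a b, c ≤ g t) {p q : ℝ × X}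
    (hp : p.1 ∈ Icc a b) (hq : q.1 ∈ Icc a b) (h : WPCausal g p q) :
    dist p.2 q.2 ≤ (q.1 - p.1) / c := by
  have h2 := h.2.trans (cap_le hc hg hp hq h.1)
  rwa [ENNReal.ofReal_le_ofReal_iff (div_nonneg (by linarith [h.1]) hc.le)] at h2

lemma causal_of_dist_le {X : Type u} [MetricSpace X] {a b c C : ℝ} {g : ℝ → ℝ} (hc : 0 < c)
    (hg : ∀ t ∈ Icc a b, c ≤ g t) (hC : ∀ t ∈ Icc a b, g t ≤ C) {p q : ℝ × X}
    (hp : p.1 ∈ Icc a b) (hq : q.1 ∈ Icc a b) (h1 : p.1 ≤ q.1)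
    (hd : dist p.2 q.2 ≤ (q.1 - p.1) / C) : WPCausal g p q :=
  ⟨h1, (ENNReal.ofReal_le_ofReal hd).trans (le_cap hc hg hC hp hq h1)⟩

lemma dist_le_sum {X : Type u} [MetricSpace X] (z : ℕ → X) (n : ℕ) :
    dist (z 0) (z n) ≤ ∑ i ∈ Finset.range n, dist (z i) (z (i + 1)) := by
  induction n with
  | zero => simp
  | succ n ih =>
    rw [Finset.sum_range_succ]
    exact (dist_triangle (z 0) (z n) (z (n + 1))).trans (by linarith)

/-- Null length of a chain. -/
noncomputable def clen {X : Type u} [MetricSpace X] (σ : ℕ → ℝ × X) (n : ℕ) : ℝ :=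
  ∑ i ∈ Finset.range (n + 1), |(σ (i + 1)).1 - (σ i).1|

lemma clen_nonneg {X : Type u} [MetricSpace X] (σ : ℕ → ℝ × X) (n : ℕ) : 0 ≤ clen σ n :=
  Finset.sum_nonneg fun _ _ => abs_nonneg _

lemma nullDist_mem {X : Type u} [MetricSpace X] {I : Set ℝ} {g : ℝ → ℝ} {p q : ℝ × X}
    {n : ℕ} {σ : ℕ → ℝ × X} (h : WPChain I g p q n σ) :
    clen σ n ∈ { r | ∃ n σ, WPChain I g p q n σ ∧
      r = ∑ i ∈ Finset.range (n + 1), |(σ (i + 1)).1 - (σ i).1| } :=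
  ⟨n, σ, h, rfl⟩

lemma nd_bdd {X : Type u} [MetricSpace X] {I : Set ℝ} {g : ℝ → ℝ} {p q : ℝ × X} :
    BddBelow { r | ∃ n σ, WPChain I g p q n σ ∧
      r = ∑ i ∈ Finset.range (n + 1), |(σ (i + 1)).1 - (σ i).1| } := by
  refine ⟨0, fun r hr => ?_⟩
  obtain ⟨n, σ, -, rfl⟩ := hr
  exact clen_nonneg σ n

lemma nullDist_le {X : Type u} [MetricSpace X] {I : Set ℝ} {g : ℝ → ℝ} {p q : ℝ × X}
    {n : ℕ} {σ : ℕ → ℝ × X} (h : WPChain I g p q n σ) :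
    nullDist I g p q ≤ clen σ n :=
  csInf_le nd_bdd (nullDist_mem h)

/-- lower bounds on chain length -/
lemma chain_time_lb {X : Type u} [MetricSpace X] {I : Set ℝ} {g : ℝ → ℝ} {p q : ℝ × X}
    {n : ℕ} {σ : ℕ → ℝ × X} (h : WPChain I g p q n σ) : |q.1 - p.1| ≤ clen σ n := by
  have : q.1 - p.1 = ∑ i ∈ Finset.range (n + 1), ((σ (i + 1)).1 - (σ i).1) := by
    rw [Finset.sum_range_sub (fun i => (σ i).1), h.1, h.2.1]
  rw [this]
  exact Finset.abs_sum_le_sum_abs _ _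

lemma chain_dist_lb {X : Type u} [MetricSpace X] {a b c : ℝ} {g : ℝ → ℝ} (hc : 0 < c)
    (hg : ∀ t ∈ Icc a b, c ≤ g t) {p q : ℝ × X}
    {n : ℕ} {σ : ℕ → ℝ × X} (h : WPChain (Icc a b) g p q n σ) :
    c * dist p.2 q.2 ≤ clen σ n := by
  obtain ⟨h0, hend, hmem, hcaus⟩ := h
  have key : ∀ i ≤ n, dist (σ i).2 (σ (i + 1)).2 ≤ |(σ (i + 1)).1 - (σ i).1| / c := by
    intro i hi
    have hi1 : (σ i).1 ∈ Icc a b := hmem i (by omega)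
    have hi2 : (σ (i + 1)).1 ∈ Icc a b := hmem (i + 1) (by omega)
    rcases hcaus i hi with hcc | hcc
    · refine (causal_dist_le hc hg hi1 hi2 hcc).trans ?_
      gcongr
      exact le_abs_self _
    · rw [dist_comm]
      refine (causal_dist_le hc hg hi2 hi1 hcc).trans ?_
      rw [abs_sub_comm]
      gcongr
      exact le_abs_self _
  have hdle : dist p.2 q.2 ≤ clen σ n / c := by
    rw [clen, Finset.sum_div]
    calc dist p.2 q.2 = dist (σ 0).2 (σ (n + 1)).2 := by rw [h0, hend]
      _ ≤ ∑ i ∈ Finset.range (n + 1), dist (σ i).2 (σ (i + 1)).2 := dist_le_sum (fun i => (σ i).2) (n + 1)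
      _ ≤ _ := Finset.sum_le_sum fun i hi => key i (Finset.mem_range_succ_iff.1 hi)
  have := (le_div_iff₀ hc).1 hdle
  linarith
lemma chain_reverse {X : Type u} [MetricSpace X] {I : Set ℝ} {g : ℝ → ℝ} {p q : ℝ × X}
    {n : ℕ} {σ : ℕ → ℝ × X} (h : WPChain I g p q n σ) :
    ∃ σ', WPChain I g q p n σ' ∧ clen σ' n = clen σ n := by
  obtain ⟨h0, hend, hmem, hcaus⟩ := h
  refine ⟨fun i => σ (n + 1 - i), ⟨by simpa using hend, by simpa using h0, ?_, ?_⟩, ?_⟩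
  · intro i hi
    exact hmem (n + 1 - i) (by omega)
  · intro i hi
    beta_reduce
    rw [show n + 1 - (i + 1) = n - i by omega]
    rcases hcaus (n - i) (by omega) with hcc | hcc
    · right; rwa [show n - i + 1 = n + 1 - i by omega] at hcc
    · left; rwa [show n - i + 1 = n + 1 - i by omega] at hcc
  · unfold clen
    rw [← Finset.sum_range_reflect (fun i => |(σ (i + 1)).1 - (σ i).1|) (n + 1)]
    refine Finset.sum_congr rfl fun i hi => ?_
    have hi' : i ≤ n := Finset.mem_range_succ_iff.1 hi
    beta_reduce
    rw [show n + 1 - (i + 1) = n - i by omega, show n + 1 - 1 - i = n - i by omega,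
      show n - i + 1 = n + 1 - i by omega, abs_sub_comm]

lemma chain_concat {X : Type u} [MetricSpace X] {I : Set ℝ} {g : ℝ → ℝ} {p q r : ℝ × X}
    {n m : ℕ} {σ τ : ℕ → ℝ × X} (h1 : WPChain I g p q n σ) (h2 : WPChain I g q r m τ) :
    ∃ ρ, WPChain I g p r (n + m + 1) ρ ∧ clen ρ (n + m + 1) = clen σ n + clen τ m := by
  obtain ⟨h0, hend, hmem, hcaus⟩ := h1
  obtain ⟨g0, gend, gmem, gcaus⟩ := h2
  set ρ : ℕ → ℝ × X := fun i => if i ≤ n + 1 then σ i else τ (i - (n + 1)) with hρ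
  have keyσ : ∀ i ≤ n + 1, ρ i = σ i := fun i hi => if_pos hi
  have key : ∀ i, ρ (n + 1 + i) = τ i := by
    intro i
    rcases Nat.eq_zero_or_pos i with rfl | hi
    · simp only [hρ, add_zero, if_pos le_rfl]
      rw [hend, g0]
    · simp only [hρ, if_neg (by omega : ¬ n + 1 + i ≤ n + 1)]
      congr 1
      omega
  refine ⟨ρ, ⟨by rw [keyσ 0 (by omega), h0], ?_, ?_, ?_⟩, ?_⟩
  · rw [show n + m + 1 + 1 = n + 1 + (m + 1) by omega, key, gend]
  · intro i hi
    by_cases hin : i ≤ n + 1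
    · rw [keyσ i hin]; exact hmem i hin
    · obtain ⟨j, rfl⟩ : ∃ j, i = n + 1 + j := ⟨i - (n + 1), by omega⟩
      rw [key]; exact gmem j (by omega)
  · intro i hi
    by_cases hin : i ≤ n
    · rw [keyσ i (by omega), keyσ (i + 1) (by omega)]
      exact hcaus i hin
    · obtain ⟨j, rfl⟩ : ∃ j, i = n + 1 + j := ⟨i - (n + 1), by omega⟩
      rw [show n + 1 + j + 1 = n + 1 + (j + 1) by omega, key, key]
      exact gcaus j (by omega)
  · unfold clen
    rw [show n + m + 1 + 1 = (n + 1) + (m + 1) by omega, Finset.sum_range_add]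
    congr 1
    · refine Finset.sum_congr rfl fun i hi => ?_
      have hi' : i ≤ n := Finset.mem_range_succ_iff.1 hi
      rw [keyσ i (by omega), keyσ (i + 1) (by omega)]
    · refine Finset.sum_congr rfl fun i hi => ?_
      rw [show n + 1 + i + 1 = n + 1 + (i + 1) by omega, key, key]
lemma subdiv {X : Type u} [MetricSpace X]
    (hX : ∀ x y : X, ∀ ε : ℝ, 0 < ε →
      ∃ z : X, max (dist x z) (dist z y) ≤ dist x y / 2 + ε) (M : ℕ) :
    ∀ (x y : X) (ε : ℝ), 0 < ε → ∃ z : ℕ → X, z 0 = x ∧ z (2 ^ M) = y ∧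
      ∀ i < 2 ^ M, dist (z i) (z (i + 1)) ≤ dist x y / 2 ^ M + ε := by
  induction M with
  | zero =>
    intro x y ε hε
    refine ⟨fun i => if i = 0 then x else y, rfl, by norm_num, ?_⟩
    intro i hi
    have : i = 0 := by omega
    subst this
    simp only [pow_zero, div_one]
    norm_num
    linarith
  | succ M ih =>
    intro x y ε hε
    have hP : (0:ℝ) < 2 ^ M := by positivity
    obtain ⟨w, hw⟩ := hX x y (2 ^ M * ε / 2) (by positivity)
    obtain ⟨z₁, h10, h1e, h1g⟩ := ih x w (ε / 2) (by positivity)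
    obtain ⟨z₂, h20, h2e, h2g⟩ := ih w y (ε / 2) (by positivity)
    set ρ : ℕ → X := fun i => if i ≤ 2 ^ M then z₁ i else z₂ (i - 2 ^ M) with hρ
    have A : ∀ i ≤ 2 ^ M, ρ i = z₁ i := fun i hi => if_pos hi
    have B : ∀ i, ρ (2 ^ M + i) = z₂ i := by
      intro i
      rcases Nat.eq_zero_or_pos i with rfl | hi
      · simp only [hρ, add_zero, if_pos le_rfl]
        rw [h1e, h20]
      · simp only [hρ, if_neg (by omega : ¬ 2 ^ M + i ≤ 2 ^ M)]
        congr 1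
        omega
    have e : (dist x y / 2 + 2 ^ M * ε / 2) / 2 ^ M = dist x y / 2 ^ (M + 1) + ε / 2 := by
      rw [pow_succ]
      field_simp
    have key1 : dist x w / 2 ^ M + ε / 2 ≤ dist x y / 2 ^ (M + 1) + ε := by
      have h1 : dist x w / 2 ^ M ≤ (dist x y / 2 + 2 ^ M * ε / 2) / 2 ^ M := by
        gcongr
        exact le_trans (le_max_left _ _) hw
      rw [e] at h1
      linarith
    have key2 : dist w y / 2 ^ M + ε / 2 ≤ dist x y / 2 ^ (M + 1) + ε := by
      have h1 : dist w y / 2 ^ M ≤ (dist x y / 2 + 2 ^ M * ε / 2) / 2 ^ M := by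
        gcongr
        exact le_trans (le_max_right _ _) hw
      rw [e] at h1
      linarith
    refine ⟨ρ, by rw [A 0 (by positivity), h10], ?_, ?_⟩
    · rw [show 2 ^ (M + 1) = 2 ^ M + 2 ^ M by rw [pow_succ]; omega, B, h2e]
    · intro i hi
      by_cases hin : i + 1 ≤ 2 ^ M
      · rw [A i (by omega), A (i + 1) hin]
        exact (h1g i (by omega)).trans key1
      · obtain ⟨j, rfl⟩ : ∃ j, i = 2 ^ M + j := ⟨i - 2 ^ M, by omega⟩
        rw [show 2 ^ M + j + 1 = 2 ^ M + (j + 1) by omega, B, B]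
        refine (h2g j ?_).trans key2
        have : 2 ^ (M + 1) = 2 ^ M + 2 ^ M := by rw [pow_succ]; omega
        omega
lemma zigzag {X : Type u} [MetricSpace X]
    (hX : ∀ x y : X, ∀ ε : ℝ, 0 < ε →
      ∃ z : X, max (dist x z) (dist z y) ≤ dist x y / 2 + ε)
    {a b c C : ℝ} {g : ℝ → ℝ} (hab : a < b) (hc : 0 < c)
    (hg : ∀ t ∈ Icc a b, c ≤ g t) (hC : ∀ t ∈ Icc a b, g t ≤ C)
    (x y : X) {t : ℝ} (ht : t ∈ Icc a b) {ε : ℝ} (hε : 0 < ε) :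
    ∃ n σ, WPChain (Icc a b) g (t, x) (t, y) n σ ∧ clen σ n ≤ C * dist x y + ε := by
  have hC0 : 0 < C := hc.trans_le ((hg t ht).trans (hC t ht))
  set room : ℝ := (b - a) / 2 with hroomdef
  have hroom : 0 < room := by simp only [hroomdef]; linarith
  set d : ℝ := dist x y with hd
  have hd0 : 0 ≤ d := dist_nonneg
  obtain ⟨M₀, hM₀⟩ := pow_unbounded_of_one_lt (2 * C * d / room) (one_lt_two (α := ℝ))
  set M : ℕ := max M₀ 1 with hM
  set Kr : ℝ := 2 ^ M with hKr
  have hKr0 : 0 < Kr := by positivity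
  have hKrM : 2 * C * d / room < Kr := by
    refine hM₀.trans_le ?_
    exact pow_le_pow_right₀ one_le_two (le_max_left _ _)
  set ε₁ : ℝ := min (room / (2 * C)) (ε / (2 * C * Kr)) with hε₁def
  have hε₁ : 0 < ε₁ := lt_min (by positivity) (by positivity)
  set h : ℝ := C * (d / Kr + ε₁) with hhdef
  have hh0 : 0 < h := by positivity
  have hhroom : h ≤ room := by
    have h1 : C * d / Kr ≤ room / 2 := by
      rw [div_le_iff₀ hKr0]
      rw [div_lt_iff₀ hroom] at hKrM
      nlinarith
    have h2 : C * ε₁ ≤ room / 2 := by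
      have := min_le_left (room / (2 * C)) (ε / (2 * C * Kr))
      calc C * ε₁ ≤ C * (room / (2 * C)) := mul_le_mul_of_nonneg_left this hC0.le
        _ = room / 2 := by field_simp <;> ring
    calc h = C * d / Kr + C * ε₁ := by rw [hhdef]; ring
      _ ≤ room / 2 + room / 2 := add_le_add h1 h2
      _ = room := by ring
  set u : ℝ := if t ≤ (a + b) / 2 then t + h else t - h with hudef
  have hu : u ∈ Icc a b := by
    rcases le_or_gt t ((a + b) / 2) with htm | htm
    · rw [hudef, if_pos htm]
      constructor
      · linarith [ht.1]
      · simp only [hroomdef] at hhroom; linarith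
    · rw [hudef, if_neg (not_le.2 htm)]
      constructor
      · simp only [hroomdef] at hhroom; linarith
      · linarith [ht.2]
  have hut : |u - t| = h := by
    rcases le_or_gt t ((a + b) / 2) with htm | htm
    · rw [hudef, if_pos htm, show t + h - t = h by ring, abs_of_nonneg hh0.le]
    · rw [hudef, if_neg (not_le.2 htm), show t - h - t = -h by ring, abs_neg,
        abs_of_nonneg hh0.le]
  obtain ⟨z, hz0, hze, hzg⟩ := subdiv hX M x y ε₁ hε₁
  have hKnat : ((2 ^ M : ℕ) : ℝ) = Kr := by push_cast [hKr]; ring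
  set n : ℕ := 2 ^ M - 1 with hn
  have hn1 : n + 1 = 2 ^ M := by
    have : 1 ≤ 2 ^ M := Nat.one_le_two_pow
    omega
  set σ : ℕ → ℝ × X := fun j => (if Even j then t else u, z j) with hσ
  have fst : ∀ j, (σ j).1 = if Even j then t else u := fun j => rfl
  have snd : ∀ j, (σ j).2 = z j := fun j => rfl
  have hEvenK : Even (2 ^ M) := by
    refine (Nat.even_pow).2 ⟨even_two, ?_⟩
    omega
  have gap : ∀ j, |(σ (j + 1)).1 - (σ j).1| = h := by
    intro j
    rcases Nat.even_or_odd j with hj | hj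
    · rw [fst, fst, if_pos hj, if_neg (by simp [Nat.even_add_one, hj])]
      exact hut
    · rw [fst, fst, if_neg (Nat.not_even_iff_odd.2 hj),
        if_pos (Nat.even_add_one.2 (Nat.not_even_iff_odd.2 hj))]
      rw [abs_sub_comm]
      exact hut
  have hgap_dist : ∀ j, dist (z j) (z (j + 1)) ≤ h / C → True := fun _ _ => trivial
  have hhC : h / C = d / Kr + ε₁ := by
    rw [hhdef]
    field_simp
  have hmemσ : ∀ j, (σ j).1 ∈ Icc a b := by
    intro j
    rw [fst]
    split
    · exact ht
    · exact hu
  refine ⟨n, σ, ⟨?_, ?_, fun i _ => hmemσ i, ?_⟩, ?_⟩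
  · show ((if Even 0 then t else u), z 0) = (t, x)
    rw [if_pos Even.zero, hz0]
  · rw [hσ]
    beta_reduce
    rw [hn1, if_pos hEvenK, hze]
  · intro j hj
    have hjK : j < 2 ^ M := by omega
    have hdist : dist (σ j).2 (σ (j + 1)).2 ≤ h / C := by
      rw [snd, snd, hhC]
      exact hzg j hjK
    rcases le_total (σ j).1 (σ (j + 1)).1 with hle | hle
    · left
      refine causal_of_dist_le hc hg hC (hmemσ j) (hmemσ (j + 1)) hle ?_
      have e : (σ (j + 1)).1 - (σ j).1 = h := by
        rw [← gap j, abs_of_nonneg (by linarith)]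
      rw [e]
      exact hdist
    · right
      refine causal_of_dist_le hc hg hC (hmemσ (j + 1)) (hmemσ j) hle ?_
      have e : (σ j).1 - (σ (j + 1)).1 = h := by
        rw [← abs_of_nonneg (show (0:ℝ) ≤ (σ j).1 - (σ (j + 1)).1 by linarith),
          ← abs_sub_comm]
        rw [gap j]
      rw [e, dist_comm]
      exact hdist
  · have e1 : clen σ n = ((n + 1 : ℕ) : ℝ) * h := by
      rw [clen, Finset.sum_congr rfl fun i _ => gap i, Finset.sum_const,
        Finset.card_range, nsmul_eq_mul]
    rw [e1, hn1, hKnat]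
    have hε₁le : ε₁ ≤ ε / (2 * C * Kr) := min_le_right _ _
    have e2 : Kr * h = C * d + Kr * C * ε₁ := by
      rw [hhdef]
      field_simp
    rw [e2]
    have e3 : Kr * C * ε₁ ≤ ε / 2 := by
      calc Kr * C * ε₁ ≤ Kr * C * (ε / (2 * C * Kr)) := by gcongr
        _ = ε / 2 := by field_simp <;> ring
    linarith
section main

variable {X : Type u} [MetricSpace X] {a b c C : ℝ} {g : ℝ → ℝ}

lemma nd_ub
    (hX : ∀ x y : X, ∀ ε : ℝ, 0 < ε → ∃ z : X, max (dist x z) (dist z y) ≤ dist x y / 2 + ε)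
    (hab : a < b) (hc : 0 < c) (hg : ∀ t ∈ Icc a b, c ≤ g t) (hC : ∀ t ∈ Icc a b, g t ≤ C)
    {p q : ℝ × X} (hp : p.1 ∈ Icc a b) (hq : q.1 ∈ Icc a b) {ε : ℝ} (hε : 0 < ε) :
    ∃ n σ, WPChain (Icc a b) g p q n σ ∧
      clen σ n ≤ |q.1 - p.1| + C * dist p.2 q.2 + ε := by
  have hC0 : 0 < C := hc.trans_le ((hg p.1 hp).trans (hC p.1 hp))
  set σ₀ : ℕ → ℝ × X := fun i => if i = 0 then p else (q.1, p.2) with hσ₀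
  have hch₀ : WPChain (Icc a b) g p (q.1, p.2) 0 σ₀ := by
    refine ⟨rfl, rfl, ?_, ?_⟩
    · intro i hi
      interval_cases i
      · exact hp
      · exact hq
    · intro i hi
      have : i = 0 := by omega
      subst this
      show WPCausal g p (q.1, p.2) ∨ WPCausal g (q.1, p.2) p
      rcases le_total p.1 q.1 with hle | hle
      · left
        refine causal_of_dist_le hc hg hC hp hq hle ?_
        simp only [dist_self]
        exact div_nonneg (by linarith) hC0.le
      · right
        refine causal_of_dist_le hc hg hC hq hp hle ?_
        simp only [dist_self]
        exact div_nonneg (by linarith) hC0.le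
  obtain ⟨m, τ, hτ, hτlen⟩ := zigzag hX hab hc hg hC p.2 q.2 hq hε
  have hq' : ((q.1, p.2) : ℝ × X) = (q.1, p.2) := rfl
  have hqq : ((q.1, q.2) : ℝ × X) = q := rfl
  rw [hqq] at hτ
  obtain ⟨ρ, hρ, hρlen⟩ := chain_concat hch₀ hτ
  refine ⟨0 + m + 1, ρ, hρ, ?_⟩
  rw [hρlen]
  have hlen₀ : clen σ₀ 0 = |q.1 - p.1| := by
    rw [clen]
    simp [hσ₀]
  rw [hlen₀]
  linarith

lemma nd_nonempty
    (hX : ∀ x y : X, ∀ ε : ℝ, 0 < ε → ∃ z : X, max (dist x z) (dist z y) ≤ dist x y / 2 + ε)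
    (hab : a < b) (hc : 0 < c) (hg : ∀ t ∈ Icc a b, c ≤ g t) (hC : ∀ t ∈ Icc a b, g t ≤ C)
    {p q : ℝ × X} (hp : p.1 ∈ Icc a b) (hq : q.1 ∈ Icc a b) :
    Set.Nonempty { r | ∃ n σ, WPChain (Icc a b) g p q n σ ∧
      r = ∑ i ∈ Finset.range (n + 1), |(σ (i + 1)).1 - (σ i).1| } := by
  obtain ⟨n, σ, hch, -⟩ := nd_ub hX hab hc hg hC hp hq one_pos
  exact ⟨clen σ n, nullDist_mem hch⟩

lemma nd_ub'
    (hX : ∀ x y : X, ∀ ε : ℝ, 0 < ε → ∃ z : X, max (dist x z) (dist z y) ≤ dist x y / 2 + ε)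
    (hab : a < b) (hc : 0 < c) (hg : ∀ t ∈ Icc a b, c ≤ g t) (hC : ∀ t ∈ Icc a b, g t ≤ C)
    {p q : ℝ × X} (hp : p.1 ∈ Icc a b) (hq : q.1 ∈ Icc a b) :
    nullDist (Icc a b) g p q ≤ |q.1 - p.1| + C * dist p.2 q.2 := by
  refine le_of_forall_pos_le_add fun ε hε => ?_
  obtain ⟨n, σ, hch, hlen⟩ := nd_ub hX hab hc hg hC hp hq hε
  exact (nullDist_le hch).trans hlen

lemma nd_lb
    (hX : ∀ x y : X, ∀ ε : ℝ, 0 < ε → ∃ z : X, max (dist x z) (dist z y) ≤ dist x y / 2 + ε)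
    (hab : a < b) (hc : 0 < c) (hg : ∀ t ∈ Icc a b, c ≤ g t) (hC : ∀ t ∈ Icc a b, g t ≤ C)
    {p q : ℝ × X} (hp : p.1 ∈ Icc a b) (hq : q.1 ∈ Icc a b) :
    max |q.1 - p.1| (c * dist p.2 q.2) ≤ nullDist (Icc a b) g p q := by
  refine le_csInf (nd_nonempty hX hab hc hg hC hp hq) ?_
  rintro r ⟨n, σ, hch, rfl⟩
  exact max_le (chain_time_lb hch) (chain_dist_lb hc hg hch)

lemma nd_symm {I : Set ℝ} (p q : ℝ × X) :
    nullDist I g p q = nullDist I g q p := by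
  unfold nullDist
  congr 1
  ext r
  constructor
  · rintro ⟨n, σ, hch, rfl⟩
    obtain ⟨σ', h', he⟩ := chain_reverse hch
    exact ⟨n, σ', h', he.symm⟩
  · rintro ⟨n, σ, hch, rfl⟩
    obtain ⟨σ', h', he⟩ := chain_reverse hch
    exact ⟨n, σ', h', he.symm⟩

lemma nd_triangle
    (hX : ∀ x y : X, ∀ ε : ℝ, 0 < ε → ∃ z : X, max (dist x z) (dist z y) ≤ dist x y / 2 + ε)
    (hab : a < b) (hc : 0 < c) (hg : ∀ t ∈ Icc a b, c ≤ g t) (hC : ∀ t ∈ Icc a b, g t ≤ C)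
    {p q r : ℝ × X} (hp : p.1 ∈ Icc a b) (hq : q.1 ∈ Icc a b) (hr : r.1 ∈ Icc a b) :
    nullDist (Icc a b) g p r ≤ nullDist (Icc a b) g p q + nullDist (Icc a b) g q r := by
  refine le_of_forall_pos_le_add fun ε hε => ?_
  obtain ⟨r₁, hr₁, hlt₁⟩ := Real.lt_sInf_add_pos (nd_nonempty hX hab hc hg hC hp hq)
    (half_pos hε)
  obtain ⟨r₂, hr₂, hlt₂⟩ := Real.lt_sInf_add_pos (nd_nonempty hX hab hc hg hC hq hr)
    (half_pos hε)
  obtain ⟨n, σ, hch₁, rfl⟩ := hr₁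
  obtain ⟨m, τ, hch₂, rfl⟩ := hr₂
  obtain ⟨ρ, hρ, hρlen⟩ := chain_concat hch₁ hch₂
  have h3 := nullDist_le hρ
  rw [hρlen] at h3
  have h1 : clen σ n < nullDist (Icc a b) g p q + ε / 2 := hlt₁
  have h2 : clen τ m < nullDist (Icc a b) g q r + ε / 2 := hlt₂
  linarith

end main
section main2

variable {X : Type u} [MetricSpace X] {a b c C : ℝ} {g : ℝ → ℝ}

lemma nd_good
    (hX : ∀ x y : X, ∀ ε : ℝ, 0 < ε → ∃ z : X, max (dist x z) (dist z y) ≤ dist x y / 2 + ε)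
    (hab : a < b) (hc : 0 < c) (hg : ∀ t ∈ Icc a b, c ≤ g t) (hC : ∀ t ∈ Icc a b, g t ≤ C) :
    IsMetricOnStrip (Icc a b) (nullDist (X := X) (Icc a b) g) ∧
      InducesProductTopology (Icc a b) (nullDist (X := X) (Icc a b) g) := by
  have haI : a ∈ Icc a b := ⟨le_refl a, hab.le⟩
  have hC0 : 0 < C := hc.trans_le ((hg a haI).trans (hC a haI))
  constructor
  · refine ⟨?_, ?_, ?_⟩
    · intro p q hp hq
      constructor
      · intro h
        have hlb := nd_lb hX hab hc hg hC hp hq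
        rw [h] at hlb
        have h1 : |q.1 - p.1| ≤ 0 := (le_max_left _ _).trans hlb
        have h2 : c * dist p.2 q.2 ≤ 0 := (le_max_right _ _).trans hlb
        have e1 : p.1 = q.1 := by
          have := abs_nonneg (q.1 - p.1)
          have : |q.1 - p.1| = 0 := le_antisymm h1 this
          have := abs_eq_zero.1 this
          linarith
        have e2 : p.2 = q.2 := by
          have hd := dist_nonneg (x := p.2) (y := q.2)
          have : dist p.2 q.2 = 0 := by nlinarith
          exact dist_eq_zero.1 this
        exact Prod.ext e1 e2
      · rintro rfl
        refine le_antisymm ?_ ?_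
        · have := nd_ub' hX hab hc hg hC hp hp (q := p)
          simpa using this
        · exact le_trans (le_trans (abs_nonneg _) (le_max_left _ (c * dist p.2 p.2)))
            (nd_lb hX hab hc hg hC hp hp)
    · intro p q hp hq
      exact nd_symm p q
    · intro p q r hp hq hr
      exact nd_triangle hX hab hc hg hC hp hq hr
  · intro p hp ε hε
    constructor
    · refine ⟨ε / (1 + C), by positivity, fun q hq hlt => ?_⟩
      have h1 := nd_ub' hX hab hc hg hC hp hq
      have h2 : |q.1 - p.1| < ε / (1 + C) := by
        rw [abs_sub_comm]
        exact lt_of_le_of_lt (le_max_left _ _) hlt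
      have h3 : dist p.2 q.2 < ε / (1 + C) := lt_of_le_of_lt (le_max_right _ _) hlt
      have : |q.1 - p.1| + C * dist p.2 q.2 < ε / (1 + C) + C * (ε / (1 + C)) := by
        have := mul_lt_mul_of_pos_left h3 hC0
        linarith
      have e : ε / (1 + C) + C * (ε / (1 + C)) = ε := by
        field_simp
      linarith
    · refine ⟨min ε (c * ε), lt_min hε (by positivity), fun q hq hlt => ?_⟩
      have hlb := nd_lb hX hab hc hg hC hp hq
      have h1 : |q.1 - p.1| < min ε (c * ε) := lt_of_le_of_lt ((le_max_left _ _).trans hlb) hlt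
      have h2 : c * dist p.2 q.2 < min ε (c * ε) := lt_of_le_of_lt ((le_max_right _ _).trans hlb) hlt
      have h3 : |p.1 - q.1| < ε := by
        rw [abs_sub_comm]
        exact h1.trans_le (min_le_left _ _)
      have h4 : dist p.2 q.2 < ε := by
        have := h2.trans_le (min_le_right _ _)
        nlinarith
      exact max_lt h3 h4

end main2
section compare

variable {X : Type u} [MetricSpace X] {a b c C : ℝ}

lemma approx_point
    (hX : ∀ x y : X, ∀ ε : ℝ, 0 < ε → ∃ z : X, max (dist x z) (dist z y) ≤ dist x y / 2 + ε)
    (x y : X) {lam ε : ℝ} (h0 : 0 ≤ lam) (hle : lam ≤ dist x y) (hε : 0 < ε) :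
    ∃ w : X, dist x w ≤ lam + ε ∧ dist w y ≤ dist x y - lam + ε := by
  set d : ℝ := dist x y with hd
  have hd0 : 0 ≤ d := dist_nonneg
  obtain ⟨M, hM⟩ := pow_unbounded_of_one_lt (2 * d / ε) (one_lt_two (α := ℝ))
  set Kr : ℝ := 2 ^ M with hKr
  have hKr0 : 0 < Kr := by positivity
  have hdK : d / Kr ≤ ε / 2 := by
    rw [div_le_iff₀ hKr0]
    rw [div_lt_iff₀ hε] at hM
    nlinarith
  set ε₁ : ℝ := ε / (2 * Kr) with hε₁def
  have hε₁ : 0 < ε₁ := by positivity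
  have hKε₁ : Kr * ε₁ = ε / 2 := by
    rw [hε₁def]
    field_simp
  obtain ⟨z, hz0, hze, hzg⟩ := subdiv hX M x y ε₁ hε₁
  set g₀ : ℝ := d / Kr + ε₁ with hg₀def
  have hg₀ : 0 < g₀ := by positivity
  have hKr1 : (1:ℝ) ≤ Kr := one_le_pow₀ one_le_two
  have hg₀ε : g₀ ≤ ε := by
    rw [hg₀def]
    have : ε₁ ≤ ε / 2 := by
      rw [hε₁def, div_le_div_iff₀ (by positivity) two_pos]
      nlinarith
    linarith
  set j : ℕ := ⌈lam / g₀⌉₊ with hj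
  have hjK : j ≤ 2 ^ M := by
    rw [hj, Nat.ceil_le]
    have h1 : lam / g₀ ≤ d / g₀ := by gcongr
    have h2 : d / g₀ ≤ Kr := by
      rw [div_le_iff₀ hg₀, hg₀def]
      have : Kr * (d / Kr) = d := by field_simp
      nlinarith
    push_cast [hKr] at *
    linarith
  have hjlow : lam / g₀ ≤ (j : ℝ) := Nat.le_ceil _
  have hjhigh : (j : ℝ) ≤ lam / g₀ + 1 := by
    rw [hj]
    exact (Nat.ceil_lt_add_one (by positivity)).le
  have hKcast : ((2 ^ M : ℕ) : ℝ) = Kr := by push_cast [hKr]; ring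
  clear_value j g₀ ε₁ Kr d
  refine ⟨z j, ?_, ?_⟩
  · calc dist x (z j) = dist (z 0) (z j) := by rw [hz0]
      _ ≤ ∑ i ∈ Finset.range j, dist (z i) (z (i + 1)) := dist_le_sum z j
      _ ≤ ∑ _i ∈ Finset.range j, g₀ := by
          refine Finset.sum_le_sum fun i hi => ?_
          have : i < 2 ^ M := by
            have := Finset.mem_range.1 hi
            omega
          exact (hzg i this).trans_eq rfl
      _ = (j : ℝ) * g₀ := by rw [Finset.sum_const, Finset.card_range, nsmul_eq_mul]
      _ ≤ (lam / g₀ + 1) * g₀ := by gcongr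
      _ = lam + g₀ := by field_simp
      _ ≤ lam + ε := by linarith
  · have e : j + (2 ^ M - j) = 2 ^ M := by omega
    calc dist (z j) y = dist (z j) (z (2 ^ M)) := by rw [hze]
      _ ≤ ∑ i ∈ Finset.range (2 ^ M - j), dist (z (j + i)) (z (j + i + 1)) := by
          have := dist_le_sum (fun i => z (j + i)) (2 ^ M - j)
          simpa [e, add_assoc] using this
      _ ≤ ∑ _i ∈ Finset.range (2 ^ M - j), g₀ := by
          refine Finset.sum_le_sum fun i hi => ?_
          have : j + i < 2 ^ M := by
            have := Finset.mem_range.1 hi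
            omega
          exact hzg (j + i) this
      _ = ((2 ^ M - j : ℕ) : ℝ) * g₀ := by rw [Finset.sum_const, Finset.card_range, nsmul_eq_mul]
      _ = (Kr - (j : ℝ)) * g₀ := by
          rw [Nat.cast_sub hjK, hKcast]
      _ ≤ d - lam + ε := by
          have h1 : Kr * g₀ = d + Kr * ε₁ := by
            rw [hg₀def]
            field_simp
          have h2 : lam ≤ (j : ℝ) * g₀ := by
            rw [← div_le_iff₀ hg₀]
            exact hjlow
          have h3 : (Kr - (j : ℝ)) * g₀ = Kr * g₀ - (j : ℝ) * g₀ := by ring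
          rw [h3, h1, hKε₁]
          linarith

lemma cap_compare {g g' : ℝ → ℝ} (hc : 0 < c) (hg : ∀ t ∈ Icc a b, c ≤ g t)
    (hg' : ∀ t ∈ Icc a b, c ≤ g' t) {η : ℝ} (hη : 0 ≤ η)
    (hcl : ∀ t ∈ Icc a b, |g t - g' t| ≤ η)
    {u v : ℝ} (hu : u ∈ Icc a b) (hv : v ∈ Icc a b) (huv : u ≤ v) :
    (∫⁻ t in Set.Ioc u v, ENNReal.ofReal ((g t)⁻¹)) ≤
      (∫⁻ t in Set.Ioc u v, ENNReal.ofReal ((g' t)⁻¹)) +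
        ENNReal.ofReal ((v - u) * (η / c ^ 2)) := by
  have hpt : ∀ t ∈ Set.Ioc u v, ENNReal.ofReal ((g t)⁻¹) ≤
      ENNReal.ofReal ((g' t)⁻¹) + ENNReal.ofReal (η / c ^ 2) := by
    intro t ht
    have htI : t ∈ Icc a b := ⟨hu.1.trans ht.1.le, ht.2.trans hv.2⟩
    have hA : 0 < g t := hc.trans_le (hg t htI)
    have hB : 0 < g' t := hc.trans_le (hg' t htI)
    rw [← ENNReal.ofReal_add (by positivity) (by positivity)]
    refine ENNReal.ofReal_le_ofReal ?_
    rw [← sub_le_iff_le_add']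
    rw [inv_sub_inv hA.ne' hB.ne']
    refine div_le_div₀ hη ?_ (by positivity) ?_
    · have := hcl t htI
      rw [abs_le] at this
      linarith
    · nlinarith [hg t htI, hg' t htI]
  calc (∫⁻ t in Set.Ioc u v, ENNReal.ofReal ((g t)⁻¹))
      ≤ ∫⁻ t in Set.Ioc u v, (ENNReal.ofReal ((g' t)⁻¹) + ENNReal.ofReal (η / c ^ 2)) := by
        exact lintegral_mono_ae ((ae_restrict_iff' measurableSet_Ioc).2
          (Filter.Eventually.of_forall hpt))
    _ = (∫⁻ t in Set.Ioc u v, ENNReal.ofReal ((g' t)⁻¹)) +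
        ENNReal.ofReal (η / c ^ 2) * volume (Set.Ioc u v) := by
        rw [lintegral_add_right _ measurable_const, setLIntegral_const]
    _ = (∫⁻ t in Set.Ioc u v, ENNReal.ofReal ((g' t)⁻¹)) +
        ENNReal.ofReal ((v - u) * (η / c ^ 2)) := by
        rw [Real.volume_Ioc, ← ENNReal.ofReal_mul (by positivity), mul_comm]

lemma single_chain {g : ℝ → ℝ} {p q : ℝ × X}
    (h : WPCausal g p q ∨ WPCausal g q p) (hp : p.1 ∈ Icc a b) (hq : q.1 ∈ Icc a b) :
    WPChain (Icc a b) g p q 0 (fun i => if i = 0 then p else q) ∧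
      clen (X := X) (fun i => if i = 0 then p else q) 0 = |q.1 - p.1| := by
  constructor
  · refine ⟨rfl, rfl, ?_, ?_⟩
    · intro i hi
      interval_cases i
      · exact hp
      · exact hq
    · intro i hi
      have : i = 0 := by omega
      subst this
      exact h
  · rw [clen]
    simp

end compare
section compare2

variable {X : Type u} [MetricSpace X] {a b c C : ℝ} {g g' : ℝ → ℝ}

lemma seg_replace
    (hX : ∀ x y : X, ∀ ε : ℝ, 0 < ε → ∃ z : X, max (dist x z) (dist z y) ≤ dist x y / 2 + ε)
    (hab : a < b) (hc : 0 < c)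
    (hg : ∀ t ∈ Icc a b, c ≤ g t) (hg' : ∀ t ∈ Icc a b, c ≤ g' t)
    (hC' : ∀ t ∈ Icc a b, g' t ≤ C)
    {η : ℝ} (hη : 0 ≤ η) (hcl : ∀ t ∈ Icc a b, |g t - g' t| ≤ η)
    {p q : ℝ × X} (hp : p.1 ∈ Icc a b) (hq : q.1 ∈ Icc a b)
    (hcaus : WPCausal g p q) {ε : ℝ} (hε : 0 < ε) :
    nullDist (Icc a b) g' p q ≤ (q.1 - p.1) * (1 + C * (η / c ^ 2)) + ε := by
  have hC0 : 0 < C := hc.trans_le ((hg' p.1 hp).trans (hC' p.1 hp))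
  have huv : p.1 ≤ q.1 := hcaus.1
  set D : ℝ := dist p.2 q.2 with hDdef
  have hD0 : 0 ≤ D := dist_nonneg
  set r : ℝ := (q.1 - p.1) * (η / c ^ 2) with hrdef
  have hr0 : 0 ≤ r := mul_nonneg (by linarith) (by positivity)
  have hkey : ENNReal.ofReal D ≤
      (∫⁻ t in Set.Ioc p.1 q.1, ENNReal.ofReal ((g' t)⁻¹)) + ENNReal.ofReal r :=
    hcaus.2.trans (cap_compare hc hg hg' hη hcl hp hq huv)
  set ε₂ : ℝ := ε / (4 * (C + 1)) with hε₂def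
  have hε₂ : 0 < ε₂ := by positivity
  have hCε₂ : C * ε₂ ≤ ε / 4 := by
    rw [hε₂def, mul_div_assoc', div_le_div_iff₀ (by positivity) (by positivity)]
    nlinarith
  have hexp : (q.1 - p.1) * (1 + C * (η / c ^ 2)) = (q.1 - p.1) + C * r := by
    rw [hrdef]; ring
  by_cases hD : D ≤ r + ε₂
  · -- zigzag at p.1, then ride up
    obtain ⟨m, τ, hτ, hτlen⟩ := zigzag hX hab hc hg' hC' p.2 q.2 hp (ε := ε / 4) (by positivity)
    have hτ' : WPChain (Icc a b) g' ((p.1, p.2) : ℝ × X) ((p.1, q.2) : ℝ × X) m τ := hτ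
    rw [Prod.mk.eta] at hτ'
    have h1 : nullDist (Icc a b) g' p (p.1, q.2) ≤ C * D + ε / 4 :=
      (nullDist_le hτ').trans hτlen
    have h2 : nullDist (Icc a b) g' (p.1, q.2) q ≤ |q.1 - p.1| + C * dist q.2 q.2 :=
      nd_ub' hX hab hc hg' hC' hp hq
    rw [dist_self, mul_zero, add_zero, abs_of_nonneg (by linarith)] at h2
    have htri := nd_triangle hX hab hc hg' hC' hp (show ((p.1, q.2) : ℝ × X).1 ∈ Icc a b from hp) hq
    have hCD : C * D ≤ C * (r + ε₂) := mul_le_mul_of_nonneg_left hD hC0.le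
    rw [hexp]
    nlinarith
  · push_neg at hD
    set lam : ℝ := D - r - ε₂ with hlamdef
    have hlam0 : 0 ≤ lam := by rw [hlamdef]; linarith
    have hlamle : lam ≤ D := by rw [hlamdef]; linarith
    obtain ⟨w, hw1, hw2⟩ := approx_point hX p.2 q.2 hlam0 hlamle hε₂
    have hw1' : dist p.2 w ≤ D - r := by rw [hlamdef] at hw1; linarith
    have hw2' : dist w q.2 ≤ r + 2 * ε₂ := by rw [hlamdef] at hw2; linarith
    have hcaus' : WPCausal g' p (q.1, w) := by
      refine ⟨huv, ?_⟩
      have h1 : ENNReal.ofReal (dist p.2 w) ≤ ENNReal.ofReal (D - r) :=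
        ENNReal.ofReal_le_ofReal hw1'
      have h2 : ENNReal.ofReal (D - r) ≤ ∫⁻ t in Set.Ioc p.1 q.1, ENNReal.ofReal ((g' t)⁻¹) := by
        rw [ENNReal.ofReal_sub _ hr0]
        exact tsub_le_iff_right.2 hkey
      exact h1.trans h2
    obtain ⟨hsc, hsclen⟩ := single_chain (Or.inl hcaus') hp hq
    have h1 : nullDist (Icc a b) g' p (q.1, w) ≤ q.1 - p.1 := by
      refine (nullDist_le hsc).trans ?_
      rw [hsclen]
      rw [abs_of_nonneg (by linarith)]
    obtain ⟨m, τ, hτ, hτlen⟩ := zigzag hX hab hc hg' hC' w q.2 hq (ε := ε / 4) (by positivity)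
    have hτ' : WPChain (Icc a b) g' ((q.1, w) : ℝ × X) q m τ := by rwa [Prod.mk.eta] at hτ
    have h2 : nullDist (Icc a b) g' (q.1, w) q ≤ C * (r + 2 * ε₂) + ε / 4 := by
      refine (nullDist_le hτ').trans (hτlen.trans ?_)
      have := mul_le_mul_of_nonneg_left hw2' hC0.le
      linarith
    have htri := nd_triangle hX hab hc hg' hC' hp (show ((q.1, w) : ℝ × X).1 ∈ Icc a b from hq) hq
    rw [hexp]
    nlinarith

lemma chain_replace
    (hX : ∀ x y : X, ∀ ε : ℝ, 0 < ε → ∃ z : X, max (dist x z) (dist z y) ≤ dist x y / 2 + ε)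
    (hab : a < b) (hc : 0 < c)
    (hg : ∀ t ∈ Icc a b, c ≤ g t) (hg' : ∀ t ∈ Icc a b, c ≤ g' t)
    (hC' : ∀ t ∈ Icc a b, g' t ≤ C)
    {η : ℝ} (hη : 0 ≤ η) (hcl : ∀ t ∈ Icc a b, |g t - g' t| ≤ η)
    {p q : ℝ × X} {n : ℕ} {σ : ℕ → ℝ × X} (hch : WPChain (Icc a b) g p q n σ)
    {ε : ℝ} (hε : 0 < ε) :
    nullDist (Icc a b) g' p q ≤ clen σ n * (1 + C * (η / c ^ 2)) + ((n : ℝ) + 1) * ε := by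
  obtain ⟨h0, hend, hmem, hcaus⟩ := hch
  have main : ∀ k, k ≤ n + 1 → nullDist (Icc a b) g' (σ 0) (σ k) ≤
      (∑ i ∈ Finset.range k, |(σ (i + 1)).1 - (σ i).1|) * (1 + C * (η / c ^ 2))
        + (k : ℝ) * ε := by
    intro k
    induction k with
    | zero =>
      intro _
      simp only [Finset.range_zero, Finset.sum_empty, zero_mul, Nat.cast_zero, add_zero]
      have h1 := nd_ub' hX hab hc hg' hC' (hmem 0 (by omega)) (hmem 0 (by omega))
        (p := σ 0) (q := σ 0)
      simpa using h1
    | succ k ih =>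
      intro hk
      have ih' := ih (by omega)
      have hseg : nullDist (Icc a b) g' (σ k) (σ (k + 1)) ≤
          |(σ (k + 1)).1 - (σ k).1| * (1 + C * (η / c ^ 2)) + ε := by
        rcases hcaus k (by omega) with hcc | hcc
        · have h := seg_replace hX hab hc hg hg' hC' hη hcl
            (hmem k (by omega)) (hmem (k + 1) (by omega)) hcc hε
          rwa [← abs_of_nonneg (show (0:ℝ) ≤ (σ (k + 1)).1 - (σ k).1 by
            have := hcc.1; linarith)] at h
        · have h := seg_replace hX hab hc hg hg' hC' hη hcl
            (hmem (k + 1) (by omega)) (hmem k (by omega)) hcc hε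
          rw [nd_symm (σ k) (σ (k + 1))]
          rwa [← abs_of_nonneg (show (0:ℝ) ≤ (σ k).1 - (σ (k + 1)).1 by
            have := hcc.1; linarith), abs_sub_comm] at h
      have htri := nd_triangle hX hab hc hg' hC' (hmem 0 (by omega)) (hmem k (by omega))
        (hmem (k + 1) (by omega))
      rw [Finset.sum_range_succ]
      push_cast
      have e : (∑ i ∈ Finset.range k, |(σ (i + 1)).1 - (σ i).1| + |(σ (k + 1)).1 - (σ k).1|)
          * (1 + C * (η / c ^ 2)) =
          (∑ i ∈ Finset.range k, |(σ (i + 1)).1 - (σ i).1|) * (1 + C * (η / c ^ 2))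
          + |(σ (k + 1)).1 - (σ k).1| * (1 + C * (η / c ^ 2)) := by ring
      rw [e]
      linarith
  have hmain := main (n + 1) le_rfl
  rw [h0, hend] at hmain
  have e2 : ((n + 1 : ℕ) : ℝ) = (n : ℝ) + 1 := by push_cast; ring
  rw [e2] at hmain
  exact hmain

lemma nd_compare
    (hX : ∀ x y : X, ∀ ε : ℝ, 0 < ε → ∃ z : X, max (dist x z) (dist z y) ≤ dist x y / 2 + ε)
    (hab : a < b) (hc : 0 < c)
    (hg : ∀ t ∈ Icc a b, c ≤ g t) (hC : ∀ t ∈ Icc a b, g t ≤ C)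
    (hg' : ∀ t ∈ Icc a b, c ≤ g' t) (hC' : ∀ t ∈ Icc a b, g' t ≤ C)
    {η : ℝ} (hη : 0 ≤ η) (hcl : ∀ t ∈ Icc a b, |g t - g' t| ≤ η)
    {D : ℝ} (hD : ∀ x y : X, dist x y ≤ D)
    {p q : ℝ × X} (hp : p.1 ∈ Icc a b) (hq : q.1 ∈ Icc a b) :
    nullDist (Icc a b) g' p q ≤ nullDist (Icc a b) g p q
      + ((b - a) + C * D + 1) * (C * (η / c ^ 2)) := by
  have hC0 : 0 < C := hc.trans_le ((hg p.1 hp).trans (hC p.1 hp))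
  have hD0 : 0 ≤ D := le_trans dist_nonneg (hD p.2 p.2)
  have hB0 : nullDist (Icc a b) g p q ≤ (b - a) + C * D := by
    refine (nd_ub' hX hab hc hg hC hp hq).trans ?_
    have h1 : |q.1 - p.1| ≤ b - a := by
      rw [abs_le]
      constructor
      · linarith [hp.2, hq.1]
      · linarith [hp.1, hq.2]
    have h2 : C * dist p.2 q.2 ≤ C * D := mul_le_mul_of_nonneg_left (hD _ _) hC0.le
    linarith
  refine le_of_forall_pos_le_add fun ε₀ hε₀ => ?_
  have hε₁ : 0 < min ε₀ 1 := lt_min hε₀ one_pos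
  obtain ⟨L, hLmem, hLlt⟩ := Real.lt_sInf_add_pos (nd_nonempty hX hab hc hg hC hp hq)
    (half_pos hε₁)
  obtain ⟨n, σ, hch, rfl⟩ := hLmem
  have hLlt' : clen σ n < nullDist (Icc a b) g p q + min ε₀ 1 / 2 := hLlt
  have hrep := chain_replace hX hab hc hg hg' hC' hη hcl hch
    (ε := min ε₀ 1 / (2 * ((n : ℝ) + 1))) (by positivity)
  have e : ((n : ℝ) + 1) * (min ε₀ 1 / (2 * ((n : ℝ) + 1))) = min ε₀ 1 / 2 := by
    have hn1 : (0:ℝ) < (n : ℝ) + 1 := by positivity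
    field_simp
  rw [e] at hrep
  have hclen_le : clen σ n ≤ (b - a) + C * D + 1 := by
    have h3 : min ε₀ 1 ≤ 1 := min_le_right _ _
    linarith
  have hθ : 0 ≤ C * (η / c ^ 2) := by positivity
  have h2 : clen σ n * (C * (η / c ^ 2)) ≤ ((b - a) + C * D + 1) * (C * (η / c ^ 2)) :=
    mul_le_mul_of_nonneg_right hclen_le hθ
  have e2 : clen σ n * (1 + C * (η / c ^ 2)) = clen σ n + clen σ n * (C * (η / c ^ 2)) := by
    ring
  rw [e2] at hrep
  have h4 : min ε₀ 1 ≤ ε₀ := min_le_left _ _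
  linarith

end compare2
section gh

variable {X : Type u} [MetricSpace X]

lemma gh_of_close [Nonempty X] {I : Set ℝ} (hI : I.Nonempty)
    {d d' : ℝ × X → ℝ × X → ℝ} (hd : IsMetricOnStrip I d) (hd' : IsMetricOnStrip I d')
    {ε : ℝ} (hε : 0 < ε)
    (hcl : ∀ p q : ℝ × X, p.1 ∈ I → q.1 ∈ I → |d p q - d' p q| ≤ ε) :
    GHClose I d d' ε := by
  obtain ⟨hd0, hdsymm, hdtri⟩ := hd
  obtain ⟨hd'0, hd'symm, hd'tri⟩ := hd'
  set S := {p : ℝ × X // p.1 ∈ I}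
  have hS : Nonempty S := ⟨⟨(hI.some, Classical.arbitrary X), hI.some_mem⟩⟩
  -- nonnegativity
  have hdn : ∀ u v : S, 0 ≤ d u.1 v.1 := by
    intro u v
    have h1 := hdtri u.1 v.1 u.1 u.2 v.2 u.2
    have h2 := (hd0 u.1 u.1 u.2 u.2).2 rfl
    have h3 := hdsymm u.1 v.1 u.2 v.2
    linarith
  have hd'n : ∀ u v : S, 0 ≤ d' u.1 v.1 := by
    intro u v
    have h1 := hd'tri u.1 v.1 u.1 u.2 v.2 u.2
    have h2 := (hd'0 u.1 u.1 u.2 u.2).2 rfl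
    have h3 := hd'symm u.1 v.1 u.2 v.2
    linarith
  set F : S → S → ℝ := fun u v => sInf (Set.range fun w : S => d u.1 w.1 + d' w.1 v.1)
    with hFdef
  have hFbdd : ∀ u v : S, BddBelow (Set.range fun w : S => d u.1 w.1 + d' w.1 v.1) := by
    intro u v
    refine ⟨0, ?_⟩
    rintro r ⟨w, rfl⟩
    beta_reduce
    exact add_nonneg (hdn u w) (hd'n w v)
  have hFne : ∀ u v : S, (Set.range fun w : S => d u.1 w.1 + d' w.1 v.1).Nonempty :=
    fun u v => Set.range_nonempty _
  have hFle : ∀ u v w : S, F u v ≤ d u.1 w.1 + d' w.1 v.1 :=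
    fun u v w => csInf_le (hFbdd u v) ⟨w, rfl⟩
  have hF0 : ∀ u v : S, 0 ≤ F u v := by
    intro u v
    refine le_csInf (hFne u v) ?_
    rintro r ⟨w, rfl⟩
    beta_reduce
    exact add_nonneg (hdn u w) (hd'n w v)
  have hFuu : ∀ u : S, F u u ≤ 0 := by
    intro u
    have := hFle u u u
    rw [(hd0 u.1 u.1 u.2 u.2).2 rfl, (hd'0 u.1 u.1 u.2 u.2).2 rfl] at this
    linarith
  -- cross-distance lower bounds (the hard triangle inequalities)
  have key1 : ∀ u v s : S, d u.1 v.1 ≤ F u s + F v s + 2 * ε := by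
    intro u v s
    have h1 : d u.1 v.1 - F v s - 2 * ε ≤ F u s := by
      refine le_csInf (hFne u s) ?_
      rintro r ⟨w, rfl⟩
      beta_reduce
      have h2 : d u.1 v.1 - (d u.1 w.1 + d' w.1 s.1) - 2 * ε ≤ F v s := by
        refine le_csInf (hFne v s) ?_
        rintro r ⟨w', rfl⟩
        beta_reduce
        have t1 := hdtri u.1 w.1 v.1 u.2 w.2 v.2
        have t2 := hdtri w.1 w'.1 v.1 w.2 w'.2 v.2
        have t3 : d w.1 w'.1 ≤ d' w.1 w'.1 + ε := by
          have := hcl w.1 w'.1 w.2 w'.2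
          rw [abs_le] at this
          linarith [this.2]
        have t4 := hd'tri w.1 s.1 w'.1 w.2 s.2 w'.2
        have t5 := hd'symm s.1 w'.1 s.2 w'.2
        have t6 := hdsymm w'.1 v.1 w'.2 v.2
        linarith
      linarith
    linarith
  have key2 : ∀ u v s : S, d' u.1 v.1 ≤ F s u + F s v + 2 * ε := by
    intro u v s
    have h1 : d' u.1 v.1 - F s v - 2 * ε ≤ F s u := by
      refine le_csInf (hFne s u) ?_
      rintro r ⟨w, rfl⟩
      beta_reduce
      have h2 : d' u.1 v.1 - (d s.1 w.1 + d' w.1 u.1) - 2 * ε ≤ F s v := by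
        refine le_csInf (hFne s v) ?_
        rintro r ⟨w', rfl⟩
        beta_reduce
        have t1 := hd'tri u.1 w.1 v.1 u.2 w.2 v.2
        have t2 := hd'tri w.1 w'.1 v.1 w.2 w'.2 v.2
        have t3 : d' w.1 w'.1 ≤ d w.1 w'.1 + ε := by
          have := hcl w.1 w'.1 w.2 w'.2
          rw [abs_le] at this
          linarith [this.1]
        have t4 := hdtri w.1 s.1 w'.1 w.2 s.2 w'.2
        have t5 := hdsymm w.1 s.1 w.2 s.2
        have t6 := hd'symm u.1 w.1 u.2 w.2
        linarith
      linarith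
    linarith
  have key3 : ∀ u v s : S, F u v ≤ d u.1 s.1 + F s v := by
    intro u v s
    have : F u v - d u.1 s.1 ≤ F s v := by
      refine le_csInf (hFne s v) ?_
      rintro r ⟨w, rfl⟩
      beta_reduce
      have h1 := hFle u v w
      have t1 := hdtri u.1 s.1 w.1 u.2 s.2 w.2
      linarith
    linarith
  have key4 : ∀ u v s : S, F u v ≤ F u s + d' s.1 v.1 := by
    intro u v s
    have : F u v - d' s.1 v.1 ≤ F u s := by
      refine le_csInf (hFne u s) ?_
      rintro r ⟨w, rfl⟩
      beta_reduce
      have h1 := hFle u v w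
      have t1 := hd'tri w.1 s.1 v.1 w.2 s.2 v.2
      linarith
    linarith
  -- the metric on the disjoint union
  refine ⟨S ⊕ S, fun z w =>
    match z, w with
    | Sum.inl u, Sum.inl v => d u.1 v.1
    | Sum.inr u, Sum.inr v => d' u.1 v.1
    | Sum.inl u, Sum.inr v => F u v + ε
    | Sum.inr u, Sum.inl v => F v u + ε, ⟨?_, ?_, ?_⟩, Sum.inl, Sum.inr,
    fun u v => rfl, fun u v => rfl, ?_, ?_⟩
  · -- zero iff eq
    rintro (u | u) (v | v)
    · simp only
      rw [hd0 u.1 v.1 u.2 v.2]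
      constructor
      · intro h
        congr 1
        exact Subtype.ext h
      · intro h
        injection h with h
        rw [h]
    · simp only
      constructor
      · intro h
        exfalso
        have := hF0 u v
        linarith
      · intro h
        exact absurd h (by simp)
    · simp only
      constructor
      · intro h
        exfalso
        have := hF0 v u
        linarith
      · intro h
        exact absurd h (by simp)
    · simp only
      rw [hd'0 u.1 v.1 u.2 v.2]
      constructor
      · intro h
        congr 1
        exact Subtype.ext h
      · intro h
        injection h with h
        rw [h]
  · -- symm
    rintro (u | u) (v | v)
    · exact hdsymm u.1 v.1 u.2 v.2
    · rfl
    · rfl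
    · exact hd'symm u.1 v.1 u.2 v.2
  · -- triangle
    rintro (u | u) (s | s) (v | v)
    · exact hdtri u.1 s.1 v.1 u.2 s.2 v.2
    · simp only
      have := key3 u v s
      linarith
    · simp only
      have := key1 u v s
      linarith
    · simp only
      have := key4 u v s
      linarith
    · simp only
      have h1 := key3 v u s
      have h2 := hdsymm v.1 s.1 v.2 s.2
      linarith
    · simp only
      have := key2 u v s
      linarith
    · simp only
      have h1 := key4 v u s
      have h2 := hd'symm s.1 u.1 s.2 u.2
      linarith
    · exact hd'tri u.1 s.1 v.1 u.2 s.2 v.2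
  · intro u
    refine ⟨u, ?_⟩
    simp only
    have := hFuu u
    linarith
  · intro v
    refine ⟨v, ?_⟩
    simp only
    have := hFuu v
    linarith

end gh
end S12

/-- for a nonempty compact length space `X`, `I = [a,b]` with `a < b`, and
continuous warping functions `f_j ≥ c > 0` converging uniformly on `I` to `f_∞`, each null
distance `d̂_{f_j}` and `d̂_{f_∞}` is a metric on `I × X` inducing the product topology,
and `d_GH((I × X, d̂_{f_j}), (I × X, d̂_{f_∞})) → 0` as `j → ∞`. -/
theorem stmt12 {X : Type u} [MetricSpace X] [CompactSpace X] [Nonempty X]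
    (hX : ∀ x y : X, ∀ ε : ℝ, 0 < ε →
      ∃ z : X, max (dist x z) (dist z y) ≤ dist x y / 2 + ε)
    (a b : ℝ) (hab : a < b)
    (c : ℝ) (hc : 0 < c)
    (f : ℕ → ℝ → ℝ) (flim : ℝ → ℝ)
    (hcont : ∀ j, ContinuousOn (f j) (Set.Icc a b))
    (hlow : ∀ j, ∀ t ∈ Set.Icc a b, c ≤ f j t)
    (hunif : TendstoUniformlyOn f flim Filter.atTop (Set.Icc a b)) :
    (∀ j, IsMetricOnStrip (Set.Icc a b) (nullDist (X := X) (Set.Icc a b) (f j)) ∧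
      InducesProductTopology (Set.Icc a b) (nullDist (X := X) (Set.Icc a b) (f j))) ∧
    (IsMetricOnStrip (Set.Icc a b) (nullDist (X := X) (Set.Icc a b) flim) ∧
      InducesProductTopology (Set.Icc a b) (nullDist (X := X) (Set.Icc a b) flim)) ∧
    (∀ ε : ℝ, 0 < ε → ∃ N : ℕ, ∀ j ≥ N,
      GHClose (Set.Icc a b) (nullDist (X := X) (Set.Icc a b) (f j))
        (nullDist (X := X) (Set.Icc a b) flim) ε) := by
  have hIcc : a ∈ Set.Icc a b := ⟨le_refl a, hab.le⟩
  have part1 : ∀ j, IsMetricOnStrip (Set.Icc a b) (nullDist (X := X) (Set.Icc a b) (f j)) ∧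
      InducesProductTopology (Set.Icc a b) (nullDist (X := X) (Set.Icc a b) (f j)) := by
    intro j
    obtain ⟨x₀, hx₀, hmax⟩ := isCompact_Icc.exists_isMaxOn ⟨a, hIcc⟩ (hcont j)
    exact S12.nd_good hX hab hc (hlow j) (fun t ht => hmax ht)
  have hlimcont : ContinuousOn flim (Set.Icc a b) :=
    hunif.continuousOn (Filter.Eventually.of_forall hcont).frequently
  have hlimlow : ∀ t ∈ Set.Icc a b, c ≤ flim t := by
    intro t ht
    exact ge_of_tendsto (hunif.tendsto_at ht)
      (Filter.Eventually.of_forall fun j => hlow j t ht)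
  obtain ⟨x₁, hx₁, hmax₁'⟩ := isCompact_Icc.exists_isMaxOn ⟨a, hIcc⟩ hlimcont
  have hmax₁ : ∀ t ∈ Set.Icc a b, flim t ≤ flim x₁ := fun t ht => hmax₁' ht
  have part2 := S12.nd_good hX hab hc hlimlow hmax₁
  refine ⟨part1, part2, ?_⟩
  intro ε hε
  have hD : ∀ x y : X, dist x y ≤ Metric.diam (Set.univ : Set X) := fun x y =>
    Metric.dist_le_diam_of_mem isCompact_univ.isBounded trivial trivial
  set D : ℝ := Metric.diam (Set.univ : Set X) with hDdef
  have hD0 : 0 ≤ D := Metric.diam_nonneg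
  have hcC₀ : c ≤ flim x₁ := hlimlow x₁ hx₁
  set C : ℝ := flim x₁ + c with hCdef
  have hC0 : 0 < C := by rw [hCdef]; linarith
  have hBpos : 0 < (b - a) + C * D + 1 := by nlinarith [mul_nonneg hC0.le hD0]
  set η : ℝ := min c (ε * c ^ 2 / (C * ((b - a) + C * D + 1) * 2)) with hηdef
  have hη0 : 0 < η := by
    refine lt_min hc (div_pos (by positivity) ?_)
    exact mul_pos (mul_pos hC0 hBpos) two_pos
  obtain ⟨N, hN⟩ := Filter.eventually_atTop.1 ((Metric.tendstoUniformlyOn_iff.1 hunif) η hη0)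
  refine ⟨N, fun j hj => ?_⟩
  have hclj : ∀ t ∈ Set.Icc a b, |f j t - flim t| ≤ η := by
    intro t ht
    have h := hN j hj t ht
    rw [Real.dist_eq, abs_sub_comm] at h
    exact h.le
  have hclj' : ∀ t ∈ Set.Icc a b, |flim t - f j t| ≤ η := by
    intro t ht
    rw [abs_sub_comm]
    exact hclj t ht
  have hηc : η ≤ c := min_le_left _ _
  have hfjC : ∀ t ∈ Set.Icc a b, f j t ≤ C := by
    intro t ht
    have h1 := hclj t ht
    rw [abs_le] at h1
    have h2 := hmax₁ t ht
    rw [hCdef]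
    linarith [h1.2]
  have hflimC : ∀ t ∈ Set.Icc a b, flim t ≤ C := by
    intro t ht
    have := hmax₁ t ht
    rw [hCdef]
    linarith
  have hkey : ((b - a) + C * D + 1) * (C * (η / c ^ 2)) ≤ ε := by
    have hη2 : η ≤ ε * c ^ 2 / (C * ((b - a) + C * D + 1) * 2) := min_le_right _ _
    have h1 : C * (η / c ^ 2) ≤
        C * ((ε * c ^ 2 / (C * ((b - a) + C * D + 1) * 2)) / c ^ 2) := by gcongr
    have h2 : C * ((ε * c ^ 2 / (C * ((b - a) + C * D + 1) * 2)) / c ^ 2)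
        = ε / (((b - a) + C * D + 1) * 2) := by
      field_simp
    rw [h2] at h1
    have h3 : ((b - a) + C * D + 1) * (C * (η / c ^ 2)) ≤
        ((b - a) + C * D + 1) * (ε / (((b - a) + C * D + 1) * 2)) :=
      mul_le_mul_of_nonneg_left h1 hBpos.le
    have h4 : ((b - a) + C * D + 1) * (ε / (((b - a) + C * D + 1) * 2)) = ε / 2 := by
      field_simp
    rw [h4] at h3
    linarith
  have hcmp : ∀ p q : ℝ × X, p.1 ∈ Set.Icc a b → q.1 ∈ Set.Icc a b →
      |nullDist (Set.Icc a b) (f j) p q - nullDist (Set.Icc a b) flim p q| ≤ ε := by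
    intro p q hp hq
    have h1 := S12.nd_compare hX hab hc (hlow j) hfjC hlimlow hflimC hη0.le hclj hD hp hq
    have h2 := S12.nd_compare hX hab hc hlimlow hflimC (hlow j) hfjC hη0.le hclj' hD hp hq
    rw [abs_le]
    constructor
    · linarith
    · linarith
  exact S12.gh_of_close ⟨a, hIcc⟩ (part1 j).1 part2.1 hε hcmp
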